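/- Let k ∈ ℕ and φ, ψ ∈ SL with φ ⊢_k ψ, and let (F_j, m_j) be any DBM-sequence such that F_{k+1} is {¬φ∨ψ}-maximal and free of deep contradictions. Then B_{k+1}(φ) ≤ B_{k+1}(ψ). -/

import Mathlib

/-!
Common framework: Depth-Bounded Boolean Logics, depth-bounded trees/forests,
mass functions and depth-bounded belief functions.
-/

namespace DBB

/-- Sentences of a propositional language with propositional variables in `V`,
connectives ¬, ∧, ∨ and the constant ⊥. -/
inductive Sentence (V : Type) : Type
  | var  : V → Sentence V
  | bot  : Sentence V
  | neg  : Sentence V → Sentence V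
  | conj : Sentence V → Sentence V → Sentence V
  | disj : Sentence V → Sentence V → Sentence V
  deriving DecidableEq

variable {V : Type}

/-- Boolean evaluation of a sentence under a valuation of the variables. -/
def eval (v : V → Bool) : Sentence V → Bool
  | .var p => v p
  | .bot => false
  | .neg φ => !(eval v φ)
  | .conj φ ψ => eval v φ && eval v ψ
  | .disj φ ψ => eval v φ || eval v ψ

/-- Classical (semantic) consequence `Γ ⊢ φ`. -/
def CC (Γ : Set (Sentence V)) (φ : Sentence V) : Prop :=
  ∀ v : V → Bool, (∀ γ ∈ Γ, eval v γ = true) → eval v φ = true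

/-- The 0-depth consequence relation `Γ ⊢₀ φ`: closure of `Γ` under the standard
introduction and elimination rules for ¬, ∧, ∨, ⊥. -/
inductive Der0 : Set (Sentence V) → Sentence V → Prop
  | prem {Γ : Set (Sentence V)} {φ} (h : φ ∈ Γ) : Der0 Γ φ
  | andI {Γ φ ψ} : Der0 Γ φ → Der0 Γ ψ → Der0 Γ (.conj φ ψ)
  | andE1 {Γ φ ψ} : Der0 Γ (.conj φ ψ) → Der0 Γ φ
  | andE2 {Γ φ ψ} : Der0 Γ (.conj φ ψ) → Der0 Γ ψ
  | orI1 {Γ φ ψ} : Der0 Γ φ → Der0 Γ (.disj φ ψ)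
  | orI2 {Γ φ ψ} : Der0 Γ ψ → Der0 Γ (.disj φ ψ)
  | orE1 {Γ φ ψ} : Der0 Γ (.disj φ ψ) → Der0 Γ (.neg φ) → Der0 Γ ψ
  | orE2 {Γ φ ψ} : Der0 Γ (.disj φ ψ) → Der0 Γ (.neg ψ) → Der0 Γ φ
  | negAndI1 {Γ φ ψ} : Der0 Γ (.neg φ) → Der0 Γ (.neg (.conj φ ψ))
  | negAndI2 {Γ φ ψ} : Der0 Γ (.neg ψ) → Der0 Γ (.neg (.conj φ ψ))
  | negAndE1 {Γ φ ψ} : Der0 Γ (.neg (.conj φ ψ)) → Der0 Γ φ → Der0 Γ (.neg ψ)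
  | negAndE2 {Γ φ ψ} : Der0 Γ (.neg (.conj φ ψ)) → Der0 Γ ψ → Der0 Γ (.neg φ)
  | negOrI {Γ φ ψ} : Der0 Γ (.neg φ) → Der0 Γ (.neg ψ) → Der0 Γ (.neg (.disj φ ψ))
  | negOrE1 {Γ φ ψ} : Der0 Γ (.neg (.disj φ ψ)) → Der0 Γ (.neg φ)
  | negOrE2 {Γ φ ψ} : Der0 Γ (.neg (.disj φ ψ)) → Der0 Γ (.neg ψ)
  | dnI {Γ φ} : Der0 Γ φ → Der0 Γ (.neg (.neg φ))
  | dnE {Γ φ} : Der0 Γ (.neg (.neg φ)) → Der0 Γ φ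
  | botI {Γ φ} : Der0 Γ φ → Der0 Γ (.neg φ) → Der0 Γ .bot
  | botE {Γ φ} : Der0 Γ .bot → Der0 Γ φ

/-- The set of subsentences of a sentence. -/
def subs : Sentence V → Set (Sentence V)
  | .var p => {Sentence.var p}
  | .bot => {Sentence.bot}
  | .neg φ => insert (.neg φ) (subs φ)
  | .conj φ ψ => insert (.conj φ ψ) (subs φ ∪ subs ψ)
  | .disj φ ψ => insert (.disj φ ψ) (subs φ ∪ subs ψ)

/-- Subsentences of a set of sentences. -/
def subsSet (Γ : Set (Sentence V)) : Set (Sentence V) := ⋃ γ ∈ Γ, subs γ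

/-- The k-depth consequence relations `Γ ⊢ₖ φ`: for `k > 0`, `Γ ⊢ₖ φ` iff there is a
subsentence `β` of `Γ ∪ {φ}` such that `Γ, β ⊢_{k-1} φ` and `Γ, ¬β ⊢_{k-1} φ`. -/
def DerK : ℕ → Set (Sentence V) → Sentence V → Prop
  | 0, Γ, φ => Der0 Γ φ
  | k+1, Γ, φ => ∃ β, β ∈ subsSet (insert φ Γ) ∧
      DerK k (insert β Γ) φ ∧ DerK k (insert (Sentence.neg β) Γ) φ

/-- Elements of `SL ∪ {*}`: `none` is the empty information `*`, `some γ` is the sentence `γ`.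
`prems` gives the corresponding set of premises. -/
def prems : Option (Sentence V) → Set (Sentence V)
  | none => ∅
  | some γ => {γ}

/-- `r ⊢₀ φ` for `r ∈ SL ∪ {*}`. -/
def Der0O (r : Option (Sentence V)) (φ : Sentence V) : Prop := Der0 (prems r) φ

/-- `r ⊢ₖ φ` for `r ∈ SL ∪ {*}`. -/
def DerKO (k : ℕ) (r : Option (Sentence V)) (φ : Sentence V) : Prop := DerK k (prems r) φ

/-- classical consequence from `r ∈ SL ∪ {*}`. -/
def CCO (r : Option (Sentence V)) (φ : Sentence V) : Prop := CC (prems r) φ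

/-- `r ⊢₀ s` where also the conclusion may be the empty information `*`
(deriving `*` is trivial). -/
def Der0OO (r : Option (Sentence V)) : Option (Sentence V) → Prop
  | none => True
  | some φ => Der0O r φ

/-! ### Depth-bounded trees -/

/-- Binary trees whose internal nodes are labelled by the branching sentence `β`:
a node with branching sentence `β` and current information `α` has children carrying
the information `α ∧ β` and `α ∧ ¬β` respectively. -/
inductive DBTree (V : Type) : Type
  | leaf : DBTree V
  | node : Sentence V → DBTree V → DBTree V → DBTree V
  deriving DecidableEq

/-- The information carried by a child of a node with information `r ∈ SL ∪ {*}` and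
branching sentence `β`: `r ∧ β` (or just `β` when `r = *`). -/
def extend (r : Option (Sentence V)) (β : Sentence V) : Option (Sentence V) :=
  some (match r with
    | none => β
    | some α => Sentence.conj α β)

/-- The set `Le(T)` of labels of the leaves of a tree `t` rooted in `r ∈ SL ∪ {*}`. -/
def leafLabels [DecidableEq V] : Option (Sentence V) → DBTree V → Finset (Option (Sentence V))
  | r, .leaf => {r}
  | r, .node β t₁ t₂ =>
      leafLabels (extend r β) t₁ ∪ leafLabels (extend r (.neg β)) t₂

/-- The number of leaves of a tree. -/
def numLeaves : DBTree V → ℕ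
  | .leaf => 1
  | .node _ t₁ t₂ => numLeaves t₁ + numLeaves t₂

/-- `Grow k t t'`: `t'` is obtained from `t` by expanding a (possibly empty) subset of the
depth-`k` leaves of `t`, each expanded leaf getting two children via some branching sentence. -/
inductive Grow : ℕ → DBTree V → DBTree V → Prop
  | keep (k : ℕ) : Grow k .leaf .leaf
  | expand (β : Sentence V) : Grow 0 .leaf (.node β .leaf .leaf)
  | node {k : ℕ} {t₁ t₁' t₂ t₂' : DBTree V} (β : Sentence V) :
      Grow k t₁ t₁' → Grow k t₂ t₂' →
      Grow (k+1) (.node β t₁ t₂) (.node β t₁' t₂')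

/-- A depth-bounded tree sequence (DBT-sequence): `T₀` is a single node, and `T_{k+1}` is
obtained from `T_k` by branching at least one node of depth `k`. -/
structure DBTSeq (V : Type) where
  tree : ℕ → DBTree V
  init : tree 0 = DBTree.leaf
  grow : ∀ k, Grow k (tree k) (tree (k+1))
  progress : ∀ k, tree (k+1) ≠ tree k

/-- `t` is a tree of depth `k` belonging to some DBT-sequence. -/
def IsDepthKTree (k : ℕ) (t : DBTree V) : Prop := ∃ S : DBTSeq V, S.tree k = t

/-- `r` decides `φ`: `r ⊢₀ φ` or `r ⊢₀ ¬φ`. -/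
def Decides (r : Option (Sentence V)) (φ : Sentence V) : Prop :=
  Der0O r φ ∨ Der0O r (.neg φ)

/-- `|dec(Γ, φ)|`: the number of elements of `Γ` deciding `φ`. -/
noncomputable def decCount [DecidableEq V] (Γ : Finset (Option (Sentence V)))
    (φ : Sentence V) : ℕ := by
  classical exact (Γ.filter (fun α => Decides α φ)).card

/-- A tree rooted in `r` is `{φ}`-closed iff all its leaves decide `φ`. -/
def TreeClosed [DecidableEq V] (r : Option (Sentence V)) (t : DBTree V) (φ : Sentence V) : Prop :=
  ∀ α ∈ leafLabels r t, Decides α φ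

/-- A tree `t` of depth `k` rooted in `r` is `{φ}`-maximal iff no depth-`k` tree with the same
root has strictly more leaves deciding `φ`. -/
def TreeMaximal [DecidableEq V] (r : Option (Sentence V)) (k : ℕ) (t : DBTree V)
    (φ : Sentence V) : Prop :=
  ∀ t' : DBTree V, IsDepthKTree k t' →
    decCount (leafLabels r t') φ ≤ decCount (leafLabels r t) φ

/-- A tree rooted in `r` is free of deep contradictions iff every classically inconsistent
leaf is already 0-depth inconsistent. -/
def TreeFreeDC [DecidableEq V] (r : Option (Sentence V)) (t : DBTree V) : Prop :=
  ∀ α ∈ leafLabels r t, CCO α Sentence.bot → Der0O α Sentence.bot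

/-! ### Depth-bounded forests -/

/-- A depth-bounded forest sequence (DBF-sequence) based on the support set
`Supp ⊆ SL ∪ {*}`: a DBT-sequence rooted in `γ` for each `γ ∈ Supp`. -/
structure DBFSeq (V : Type) where
  Supp : Finset (Option (Sentence V))
  suppNE : Supp.Nonempty
  tree : Option (Sentence V) → ℕ → DBTree V
  init : ∀ γ ∈ Supp, tree γ 0 = DBTree.leaf
  grow : ∀ γ ∈ Supp, ∀ k, Grow k (tree γ k) (tree γ (k+1))
  progress : ∀ γ ∈ Supp, ∀ k, tree γ (k+1) ≠ tree γ k

/-- `Le(F_k)`: the leaves of the depth-`k` forest of a DBF-sequence. -/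
noncomputable def DBFSeq.leaves [DecidableEq V] (F : DBFSeq V) (k : ℕ) :
    Finset (Option (Sentence V)) := by
  classical exact F.Supp.biUnion (fun γ => leafLabels γ (F.tree γ k))

/-- The depth-`k` forest is `{φ}`-closed (tree-wise). -/
def DBFSeq.Closed [DecidableEq V] (F : DBFSeq V) (k : ℕ) (φ : Sentence V) : Prop :=
  ∀ γ ∈ F.Supp, TreeClosed γ (F.tree γ k) φ

/-- The depth-`k` forest is `{φ}`-maximal (tree-wise). -/
def DBFSeq.Maximal [DecidableEq V] (F : DBFSeq V) (k : ℕ) (φ : Sentence V) : Prop :=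
  ∀ γ ∈ F.Supp, TreeMaximal γ k (F.tree γ k) φ

/-- The depth-`k` forest is free of deep contradictions (tree-wise). -/
def DBFSeq.FreeDC [DecidableEq V] (F : DBFSeq V) (k : ℕ) : Prop :=
  ∀ γ ∈ F.Supp, TreeFreeDC γ (F.tree γ k)

/-- `MassStep m m' r t t'`: the mass function `m'` refines `m` along the expansion of `t`
into `t'` (leaves keep their mass; the mass of an expanded leaf is split among its
two children). -/
inductive MassStep (m m' : Option (Sentence V) → ℝ) :
    Option (Sentence V) → DBTree V → DBTree V → Prop
  | keep {r : Option (Sentence V)} :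
      m' r = m r → MassStep m m' r .leaf .leaf
  | split {r : Option (Sentence V)} {β : Sentence V} :
      m' (extend r β) + m' (extend r (.neg β)) = m r →
      MassStep m m' r .leaf (.node β .leaf .leaf)
  | node {r : Option (Sentence V)} {β : Sentence V} {t₁ t₁' t₂ t₂' : DBTree V} :
      MassStep m m' (extend r β) t₁ t₁' →
      MassStep m m' (extend r (.neg β)) t₂ t₂' →
      MassStep m m' r (.node β t₁ t₂) (.node β t₁' t₂')

/-- A depth-bounded mass sequence (DBM-sequence): a DBF-sequence free of deep contradictions
together with probability mass functions `m_k` over `Le(F_k)` such that the mass of each leaf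
of `F_k` is either kept (if it remains a leaf) or split among its two children in `F_{k+1}`. -/
structure DBMSeq (V : Type) [DecidableEq V] extends DBFSeq V where
  m : ℕ → Option (Sentence V) → ℝ
  nonneg : ∀ k, ∀ α ∈ toDBFSeq.leaves k, 0 ≤ m k α
  total : ∀ k, ∑ α ∈ toDBFSeq.leaves k, m k α = 1
  incZero : ∀ k, ∀ α ∈ toDBFSeq.leaves k, Der0O α Sentence.bot → m k α = 0
  freeDC : ∀ k, toDBFSeq.FreeDC k
  massStep : ∀ γ ∈ toDBFSeq.Supp, ∀ k,
      MassStep (m k) (m (k+1)) γ (toDBFSeq.tree γ k) (toDBFSeq.tree γ (k+1))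

/-- The k-depth belief function `B_k(φ) = m_k(b_k(φ))` where
`b_k(φ) = {α ∈ Le(F_k) : α ⊢₀ φ, α ⊬₀ ⊥}`. -/
noncomputable def DBMSeq.B [DecidableEq V] (M : DBMSeq V) (k : ℕ) (φ : Sentence V) : ℝ := by
  classical exact ∑ α ∈ M.toDBFSeq.leaves k,
    if Der0O α φ ∧ ¬ Der0O α Sentence.bot then M.m k α else 0

/-- The k-depth plausibility function `Pl_k(φ) = m_k(pl_k(φ))` where
`pl_k(φ) = {α ∈ Le(F_k) : α ⊬₀ ¬φ}`. -/
noncomputable def DBMSeq.Pl [DecidableEq V] (M : DBMSeq V) (k : ℕ) (φ : Sentence V) : ℝ := by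
  classical exact ∑ α ∈ M.toDBFSeq.leaves k,
    if ¬ Der0O α (Sentence.neg φ) then M.m k α else 0

/-! ### Auxiliary notions -/

/-- A probability function on `SL`: a `[0,1]`-valued function which is normalised on
classical tautologies and additive on classically incompatible disjuncts. -/
def IsProbability (P : Sentence V → ℝ) : Prop :=
  (∀ φ, 0 ≤ P φ ∧ P φ ≤ 1) ∧
  (∀ φ, CC (∅ : Set (Sentence V)) φ → P φ = 1) ∧
  (∀ φ ψ, CC (∅ : Set (Sentence V)) (.neg (.conj φ ψ)) →
    P (.disj φ ψ) = P φ + P ψ)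

/-- The literal on `p` prescribed by the valuation `v`. -/
def litOf (v : V → Bool) (p : V) : Sentence V :=
  if v p then .var p else .neg (.var p)

/-- Left-associated conjunction `φ ∧ ψ₁ ∧ ⋯ ∧ ψₙ`. -/
def listConj : Sentence V → List (Sentence V) → Sentence V
  | φ, [] => φ
  | φ, ψ :: l => listConj (.conj φ ψ) l

/-- Left-associated disjunction `φ ∨ ψ₁ ∨ ⋯ ∨ ψₙ`. -/
def listDisj : Sentence V → List (Sentence V) → Sentence V
  | φ, [] => φ
  | φ, ψ :: l => listDisj (.disj φ ψ) l

/-- Conjunction of a list of sentences (`⊥` for the empty list, which is never used). -/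
def conjList : List (Sentence V) → Sentence V
  | [] => .bot
  | ψ :: l => listConj ψ l

/-- Disjunction of a list of sentences (`⊥` for the empty list, which is never used). -/
def disjList : List (Sentence V) → Sentence V
  | [] => .bot
  | ψ :: l => listDisj ψ l

/-- `α` is an atom of the language: a maximal (classically consistent) conjunction of
literals, with exactly one literal per propositional variable. -/
def IsAtom (α : Sentence V) : Prop :=
  ∃ (v : V → Bool) (l : List V), l.Nodup ∧ (∀ p : V, p ∈ l) ∧ l ≠ [] ∧
    α = conjList (l.map (litOf v))

/-- The conjunction `⋀_{i ∈ S} φ_i` of a finite set of indexed sentences. -/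
def finsetConj {n : ℕ} (φ : Fin n → Sentence V) (S : Finset (Fin n)) : Sentence V :=
  conjList ((S.sort (· ≤ ·)).map φ)

/-- The finite set of subsentences of a sentence. -/
def subsF [DecidableEq V] : Sentence V → Finset (Sentence V)
  | .var p => {Sentence.var p}
  | .bot => {Sentence.bot}
  | .neg φ => insert (.neg φ) (subsF φ)
  | .conj φ ψ => insert (.conj φ ψ) (subsF φ ∪ subsF ψ)
  | .disj φ ψ => insert (.disj φ ψ) (subsF φ ∪ subsF ψ)

/-- All branching sentences of the tree belong to `S`. -/
def BranchesIn [DecidableEq V] : DBTree V → Finset (Sentence V) → Prop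
  | .leaf, _ => True
  | .node β t₁ t₂, S => β ∈ S ∧ BranchesIn t₁ S ∧ BranchesIn t₂ S


/-! ### Auxiliary lemmas for Statement 8 -/

section Aux

variable {V : Type}

/-- Soundness of the 0-depth consequence relation. -/
theorem der0_sound {Γ : Set (Sentence V)} {φ} (h : Der0 Γ φ) : CC Γ φ := by
  induction h with
  | prem h => exact fun v hv => hv _ h
  | andI _ _ i1 i2 =>
      intro v hv; have a := i1 v hv; have b := i2 v hv; simp only [eval] at *; simp [a, b]
  | andE1 _ i =>
      intro v hv; have a := i v hv; simp only [eval, Bool.and_eq_true] at a; exact a.1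
  | andE2 _ i =>
      intro v hv; have a := i v hv; simp only [eval, Bool.and_eq_true] at a; exact a.2
  | orI1 _ i => intro v hv; have a := i v hv; simp only [eval]; simp [a]
  | orI2 _ i => intro v hv; have a := i v hv; simp only [eval]; simp [a]
  | orE1 _ _ i1 i2 =>
      intro v hv; have a := i1 v hv; have b := i2 v hv; simp only [eval] at *
      simp only [Bool.or_eq_true] at a
      rcases a with h' | h'
      · simp [h'] at b
      · exact h'
  | orE2 _ _ i1 i2 =>
      intro v hv; have a := i1 v hv; have b := i2 v hv; simp only [eval] at *
      simp only [Bool.or_eq_true] at a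
      rcases a with h' | h'
      · exact h'
      · simp [h'] at b
  | negAndI1 _ i =>
      intro v hv; have a := i v hv; simp only [eval] at *; simp at a; simp [a]
  | negAndI2 _ i =>
      intro v hv; have a := i v hv; simp only [eval] at *; simp at a; simp [a]
  | negAndE1 _ _ i1 i2 =>
      intro v hv; have a := i1 v hv; have b := i2 v hv; simp only [eval] at *
      simp at a ⊢; simp [b] at a; simp [a]
  | negAndE2 _ _ i1 i2 =>
      intro v hv; have a := i1 v hv; have b := i2 v hv; simp only [eval] at *
      simp at a ⊢; simp [b] at a; simp [a]
  | negOrI _ _ i1 i2 =>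
      intro v hv; have a := i1 v hv; have b := i2 v hv; simp only [eval] at *
      simp at a b ⊢; simp [a, b]
  | negOrE1 _ i =>
      intro v hv; have a := i v hv; simp only [eval] at *; simp at a ⊢; simp [a.1]
  | negOrE2 _ i =>
      intro v hv; have a := i v hv; simp only [eval] at *; simp at a ⊢; simp [a.2]
  | dnI _ i => intro v hv; have a := i v hv; simp only [eval] at *; simp [a]
  | dnE _ i => intro v hv; have a := i v hv; simp only [eval] at *; simpa using a
  | botI _ _ i1 i2 =>
      intro v hv; have a := i1 v hv; have b := i2 v hv; simp only [eval] at *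
      simp [a] at b
  | botE _ i =>
      intro v hv; have a := i v hv; simp only [eval] at a; exact absurd a (by simp)

/-- Soundness of the k-depth consequence relations. -/
theorem derK_sound : ∀ (k : ℕ) (Γ : Set (Sentence V)) (φ : Sentence V),
    DerK k Γ φ → CC Γ φ
  | 0, _, _, h => der0_sound h
  | (k+1), Γ, φ, ⟨β, _, h1, h2⟩ => by
      intro v hv
      by_cases hβ : eval v β = true
      · refine derK_sound k _ φ h1 v ?_
        intro g hg
        rcases Set.mem_insert_iff.1 hg with rfl | hg
        · exact hβ
        · exact hv _ hg
      · refine derK_sound k _ φ h2 v ?_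
        intro g hg
        rcases Set.mem_insert_iff.1 hg with rfl | hg
        · simp only [eval]; simpa using hβ
        · exact hv _ hg

/-- Cut for `Der0`. -/
theorem der0_cut {Γ Δ : Set (Sentence V)} {φ} (h : Der0 Γ φ)
    (hs : ∀ g ∈ Γ, Der0 Δ g) : Der0 Δ φ := by
  induction h with
  | prem h => exact hs _ h
  | andI _ _ i1 i2 => exact .andI i1 i2
  | andE1 _ i => exact .andE1 i
  | andE2 _ i => exact .andE2 i
  | orI1 _ i => exact .orI1 i
  | orI2 _ i => exact .orI2 i
  | orE1 _ _ i1 i2 => exact .orE1 i1 i2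
  | orE2 _ _ i1 i2 => exact .orE2 i1 i2
  | negAndI1 _ i => exact .negAndI1 i
  | negAndI2 _ i => exact .negAndI2 i
  | negAndE1 _ _ i1 i2 => exact .negAndE1 i1 i2
  | negAndE2 _ _ i1 i2 => exact .negAndE2 i1 i2
  | negOrI _ _ i1 i2 => exact .negOrI i1 i2
  | negOrE1 _ i => exact .negOrE1 i
  | negOrE2 _ i => exact .negOrE2 i
  | dnI _ i => exact .dnI i
  | dnE _ i => exact .dnE i
  | botI _ _ i1 i2 => exact .botI i1 i2
  | botE _ i => exact .botE i

theorem der0_weaken {Γ Δ : Set (Sentence V)} {φ} (h : Der0 Γ φ) (hsub : Γ ⊆ Δ) :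
    Der0 Δ φ :=
  der0_cut h fun _ hg => .prem (hsub hg)

/-- A node's information derives whatever its parent's information derives. -/
theorem der0O_extend {r : Option (Sentence V)} {β g : Sentence V}
    (h : Der0O r g) : Der0O (extend r β) g := by
  cases r with
  | none => exact der0_weaken h (by intro x hx; exact absurd hx (Set.notMem_empty x))
  | some α =>
      refine der0_cut h ?_
      intro x hx
      rcases hx with rfl
      exact .andE1 (.prem rfl)

/-- A node's information derives its own branching sentence. -/
theorem der0O_extend_self (r : Option (Sentence V)) (β : Sentence V) :
    Der0O (extend r β) β := by
  cases r with
  | none => exact .prem rfl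
  | some α => exact .andE2 (.prem rfl)

/-! #### Spine structure of leaf labels -/

/-- `Spine a b`: `a` lies on the left conjunction spine of `b`. -/
inductive Spine : Sentence V → Sentence V → Prop
  | refl (a : Sentence V) : Spine a a
  | step {a b : Sentence V} (c : Sentence V) : Spine a b → Spine a (.conj b c)

theorem Spine.size_le : ∀ {a b : Sentence V}, Spine a b → sizeOf a ≤ sizeOf b := by
  intro a b h
  induction h with
  | refl => exact le_refl _
  | step c _ ih => exact le_trans ih (by cases c <;> simp <;> omega)

theorem spine_comp {a b c : Sentence V} (ha : Spine a c) (hb : Spine b c) :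
    Spine a b ∨ Spine b a := by
  induction hb generalizing a with
  | refl => exact Or.inl ha
  | step c' hb ih =>
      cases ha with
      | refl => exact Or.inr (.step _ hb)
      | step _ ha' => exact ih ha'

theorem spine_trans {a b c : Sentence V} (h1 : Spine a b) (h2 : Spine b c) : Spine a c := by
  induction h2 with
  | refl => exact h1
  | step c' _ ih => exact .step _ ih

/-- `Ext r δ`: `δ` can carry information extending `r`. -/
def Ext : Option (Sentence V) → Option (Sentence V) → Prop
  | none, _ => True
  | some _, none => False
  | some ρ, some d => Spine ρ d

theorem ext_refl (r : Option (Sentence V)) : Ext r r := by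
  cases r with
  | none => trivial
  | some ρ => exact Spine.refl ρ

theorem ext_extend {r δ : Option (Sentence V)} {β : Sentence V}
    (h : Ext (extend r β) δ) : Ext r δ := by
  cases r with
  | none => trivial
  | some ρ =>
      cases δ with
      | none => exact h
      | some d =>
          exact spine_trans (.step _ (.refl ρ)) h

theorem mem_leafLabels_ext [DecidableEq V] :
    ∀ (s : DBTree V) (r δ : Option (Sentence V)), δ ∈ leafLabels r s → Ext r δ := by
  intro s
  induction s with
  | leaf =>
      intro r δ hδ
      simp only [leafLabels, Finset.mem_singleton] at hδ
      exact hδ ▸ ext_refl _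
  | node β t₁ t₂ ih₁ ih₂ =>
      intro r δ hδ
      simp only [leafLabels, Finset.mem_union] at hδ
      rcases hδ with hδ | hδ
      · exact ext_extend (ih₁ _ _ hδ)
      · exact ext_extend (ih₂ _ _ hδ)

/-- Spine case analysis. -/
theorem spine_cases {a d : Sentence V} (h : Spine a d) :
    a = d ∨ ∃ b c, d = .conj b c ∧ Spine a b := by
  cases h with
  | refl => exact Or.inl rfl
  | step c h' => exact Or.inr ⟨_, _, rfl, h'⟩

/-- Leaf labels coming from the two children of a node are distinct. -/
theorem ext_children_disjoint {r δ : Option (Sentence V)} {β : Sentence V}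
    (h1 : Ext (extend r β) δ) (h2 : Ext (extend r (.neg β)) δ) : False := by
  cases r with
  | none =>
      cases δ with
      | none => exact h1
      | some d =>
          have h1' : Spine β d := h1
          have h2' : Spine (Sentence.neg β) d := h2
          rcases spine_comp h1' h2' with h | h
          · rcases spine_cases h with he | ⟨b, c, he, hs⟩
            · have := congrArg sizeOf he; simp at this
            · exact absurd he (by simp)
          · rcases spine_cases h with he | ⟨b, c, he, hs⟩
            · have := congrArg sizeOf he; simp at this
            · have hle := Spine.size_le hs
              have := congrArg sizeOf he; simp at this hle; omega
  | some ρ =>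
      cases δ with
      | none => exact h1
      | some d =>
          have h1' : Spine (Sentence.conj ρ β) d := h1
          have h2' : Spine (Sentence.conj ρ (.neg β)) d := h2
          rcases spine_comp h1' h2' with h | h
          · rcases spine_cases h with he | ⟨b, c, he, hs⟩
            · have := congrArg sizeOf he; simp at this
            · simp only [Sentence.conj.injEq] at he
              obtain ⟨rfl, rfl⟩ := he
              have hle := Spine.size_le hs
              simp at hle; omega
          · rcases spine_cases h with he | ⟨b, c, he, hs⟩
            · have := congrArg sizeOf he; simp at this
            · simp only [Sentence.conj.injEq] at he
              obtain ⟨rfl, rfl⟩ := he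
              have hle := Spine.size_le hs
              simp at hle; omega

/-- Leaf labels of a tree are pairwise distinct: the cardinality of `Le(T)` is the
number of leaves. -/
theorem card_leafLabels [DecidableEq V] :
    ∀ (s : DBTree V) (r : Option (Sentence V)), (leafLabels r s).card = numLeaves s := by
  intro s
  induction s with
  | leaf => intro r; simp [leafLabels, numLeaves]
  | node β t₁ t₂ ih₁ ih₂ =>
      intro r
      have hdisj : Disjoint (leafLabels (extend r β) t₁)
          (leafLabels (extend r (.neg β)) t₂) := by
        rw [Finset.disjoint_left]
        intro δ hδ1 hδ2
        exact ext_children_disjoint (mem_leafLabels_ext _ _ _ hδ1)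
          (mem_leafLabels_ext _ _ _ hδ2)
      simp only [leafLabels, numLeaves]
      rw [Finset.card_union_of_disjoint hdisj, ih₁, ih₂]

/-- Whatever a node derives, all its descendant leaves derive. -/
theorem der0_leafLabels [DecidableEq V] :
    ∀ (s : DBTree V) (r δ : Option (Sentence V)) (χ : Sentence V),
      δ ∈ leafLabels r s → Der0O r χ → Der0O δ χ := by
  intro s
  induction s with
  | leaf =>
      intro r δ χ hδ h
      simp only [leafLabels, Finset.mem_singleton] at hδ
      subst hδ; exact h
  | node β t₁ t₂ ih₁ ih₂ =>
      intro r δ χ hδ h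
      simp only [leafLabels, Finset.mem_union] at hδ
      rcases hδ with hδ | hδ
      · exact ih₁ _ _ _ hδ (der0O_extend h)
      · exact ih₂ _ _ _ hδ (der0O_extend h)

/-! #### Full binary trees, and extending a tree into a DBT-sequence -/

/-- Full binary trees of a given depth. -/
inductive Full : ℕ → DBTree V → Prop
  | leaf : Full 0 .leaf
  | node {k : ℕ} {t₁ t₂ : DBTree V} (β : Sentence V) :
      Full k t₁ → Full k t₂ → Full (k+1) (.node β t₁ t₂)

/-- Truncation / full extension of a tree at a given depth. -/
def etr : ℕ → DBTree V → DBTree V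
  | 0, _ => .leaf
  | j+1, .leaf => .node .bot (etr j .leaf) (etr j .leaf)
  | j+1, .node β t₁ t₂ => .node β (etr j t₁) (etr j t₂)

theorem grow_etr : ∀ (j : ℕ) (t : DBTree V), Grow j (etr j t) (etr (j+1) t) := by
  intro j
  induction j with
  | zero =>
      intro t
      cases t with
      | leaf => exact Grow.expand _
      | node β t₁ t₂ => exact Grow.expand β
  | succ j ih =>
      intro t
      cases t with
      | leaf => exact Grow.node _ (ih _) (ih _)
      | node β t₁ t₂ => exact Grow.node β (ih _) (ih _)

theorem numLeaves_etr : ∀ (j : ℕ) (t : DBTree V), numLeaves (etr j t) = 2 ^ j := by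
  intro j
  induction j with
  | zero => intro t; simp [etr, numLeaves]
  | succ j ih =>
      intro t
      cases t with
      | leaf => simp [etr, numLeaves, ih, pow_succ]; ring
      | node β t₁ t₂ => simp [etr, numLeaves, ih, pow_succ]; ring

theorem etr_full {j : ℕ} {t : DBTree V} (h : Full j t) : etr j t = t := by
  induction h with
  | leaf => rfl
  | node β _ _ ih1 ih2 => simp [etr, ih1, ih2]

theorem full_etr : ∀ (j : ℕ) (t : DBTree V), Full j (etr j t) := by
  intro j
  induction j with
  | zero =>
      intro t
      cases t with
      | leaf => exact Full.leaf
      | node β t₁ t₂ => exact Full.leaf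
  | succ j ih =>
      intro t
      cases t with
      | leaf => exact Full.node _ (ih _) (ih _)
      | node β t₁ t₂ => exact Full.node β (ih _) (ih _)

theorem numLeaves_full {j : ℕ} {t : DBTree V} (h : Full j t) : numLeaves t = 2 ^ j := by
  rw [← etr_full h, numLeaves_etr]

theorem isDepthKTree_of_full {j : ℕ} {t : DBTree V} (h : Full j t) :
    IsDepthKTree j t := by
  refine ⟨⟨fun i => etr i t, rfl, fun i => grow_etr i t, fun i => ?_⟩, etr_full h⟩
  intro he
  have he' : etr (i+1) t = etr i t := he
  have h1 := numLeaves_etr (i+1) t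
  rw [he', numLeaves_etr] at h1
  have h2 : 0 < 2 ^ i := by positivity
  rw [pow_succ] at h1
  omega

/-- Number of leaves at most doubles along a `Grow` step. -/
theorem grow_numLeaves {k : ℕ} {t t' : DBTree V} (h : Grow k t t') :
    numLeaves t' ≤ 2 * numLeaves t := by
  induction h with
  | keep => simp [numLeaves]
  | expand => simp [numLeaves]
  | node β _ _ i1 i2 => simp only [numLeaves]; omega

theorem numLeaves_DBFSeq (F : DBFSeq V) {γ : Option (Sentence V)} (hγ : γ ∈ F.Supp)
    (j : ℕ) : numLeaves (F.tree γ j) ≤ 2 ^ j := by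
  induction j with
  | zero => rw [F.init γ hγ]; simp [numLeaves]
  | succ j ih =>
      have := grow_numLeaves (F.grow γ hγ j)
      rw [pow_succ]
      omega

/-! #### The witness tree extracted from a k-depth derivation -/

theorem witness_tree [DecidableEq V] :
    ∀ (k : ℕ) (Γ : Set (Sentence V)) (ψ : Sentence V) (r : Option (Sentence V)),
      DerK k Γ ψ → (∀ g ∈ Γ, Der0O r g) →
      ∃ t : DBTree V, Full k t ∧ ∀ δ ∈ leafLabels r t, Der0O δ ψ := by
  intro k
  induction k with
  | zero =>
      intro Γ ψ r h hr
      refine ⟨.leaf, Full.leaf, ?_⟩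
      intro δ hδ
      simp only [leafLabels, Finset.mem_singleton] at hδ
      subst hδ
      exact der0_cut h hr
  | succ k ih =>
      rintro Γ ψ r ⟨β, -, h1, h2⟩ hr
      have hr1 : ∀ g ∈ insert β Γ, Der0O (extend r β) g := by
        intro g hg
        rcases Set.mem_insert_iff.1 hg with rfl | hg
        · exact der0O_extend_self r _
        · exact der0O_extend (hr _ hg)
      have hr2 : ∀ g ∈ insert (Sentence.neg β) Γ, Der0O (extend r (.neg β)) g := by
        intro g hg
        rcases Set.mem_insert_iff.1 hg with rfl | hg
        · exact der0O_extend_self r _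
        · exact der0O_extend (hr _ hg)
      obtain ⟨t₁, hf₁, hl₁⟩ := ih (insert β Γ) ψ (extend r β) h1 hr1
      obtain ⟨t₂, hf₂, hl₂⟩ := ih (insert (.neg β) Γ) ψ (extend r (.neg β)) h2 hr2
      refine ⟨.node β t₁ t₂, Full.node β hf₁ hf₂, ?_⟩
      intro δ hδ
      simp only [leafLabels, Finset.mem_union] at hδ
      rcases hδ with hδ | hδ
      · exact hl₁ _ hδ
      · exact hl₂ _ hδ

end Aux

/-- If `φ ⊢ₖ ψ` and `(F_j, m_j)` is any DBM-sequence such that `F_{k+1}` is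
`{¬φ ∨ ψ}`-maximal and free of deep contradictions, then `B_{k+1}(φ) ≤ B_{k+1}(ψ)`. -/
theorem belief_monotone_of_maximal {V : Type} [DecidableEq V] [Fintype V]
    (k : ℕ) (φ ψ : Sentence V) (h : DerK k {φ} ψ)
    (M : DBMSeq V)
    (hmax : M.toDBFSeq.Maximal (k+1) (.disj (.neg φ) ψ))
    (hfree : M.toDBFSeq.FreeDC (k+1)) :
    M.B (k+1) φ ≤ M.B (k+1) ψ := by
  classical
  set χ : Sentence V := .disj (.neg φ) ψ with hχdef
  -- Key step: every 0-depth consistent leaf of `F_{k+1}` deriving `φ` also derives `ψ`.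
  have key : ∀ α ∈ M.toDBFSeq.leaves (k+1),
      Der0O α φ → ¬ Der0O α Sentence.bot → Der0O α ψ := by
    intro α hα hφder hbot
    unfold DBFSeq.leaves at hα
    rw [Finset.mem_biUnion] at hα
    obtain ⟨γ, hγ, hmem⟩ := hα
    -- every leaf of the tree rooted in γ decides χ
    have hdec : ∀ δ ∈ leafLabels γ (M.toDBFSeq.tree γ (k+1)), Decides δ χ := by
      by_contra hcon
      push_neg at hcon
      obtain ⟨δ₀, hδ₀, hnd⟩ := hcon
      -- the witness tree: branch on φ at the root, then follow the k-depth derivation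
      have hφφ : ∀ g ∈ ({φ} : Set (Sentence V)), Der0O (extend γ φ) g := by
        intro g hg
        rcases Set.mem_singleton_iff.1 hg with rfl
        exact der0O_extend_self γ _
      obtain ⟨t₁, hf₁, hl₁⟩ := witness_tree k {φ} ψ (extend γ φ) h hφφ
      set t' : DBTree V := .node φ t₁ (etr k .leaf) with ht'def
      have hfull : Full (k+1) t' := Full.node φ hf₁ (full_etr k _)
      have hder : ∀ δ ∈ leafLabels γ t', Der0O δ χ := by
        intro δ hδ
        simp only [ht'def, leafLabels, Finset.mem_union] at hδ
        rcases hδ with hδ | hδ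
        · exact Der0.orI2 (hl₁ _ hδ)
        · exact Der0.orI1
            (der0_leafLabels _ _ _ _ hδ (der0O_extend_self γ (.neg φ)))
      -- the witness tree has 2^(k+1) leaves, all deciding χ
      have hcount1 : decCount (leafLabels γ t') χ = 2 ^ (k+1) := by
        unfold decCount
        have hfe : Finset.filter (fun α => Decides α χ) (leafLabels γ t')
            = leafLabels γ t' := Finset.filter_eq_self.2
          (fun x hx => (Or.inl (hder x hx) : Decides x χ))
        rw [hfe, card_leafLabels, numLeaves_full hfull]
      -- the actual tree has at most 2^(k+1) leaves, not all deciding χ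
      have hcount2 : decCount (leafLabels γ (M.toDBFSeq.tree γ (k+1))) χ
          < 2 ^ (k+1) := by
        unfold decCount
        have hlt : (Finset.filter (fun α => Decides α χ)
              (leafLabels γ (M.toDBFSeq.tree γ (k+1)))).card
            < (leafLabels γ (M.toDBFSeq.tree γ (k+1))).card := by
          apply Finset.card_lt_card
          constructor
          · exact Finset.filter_subset _ _
          · intro hsub
            exact hnd (Finset.mem_filter.1 (hsub hδ₀)).2
        have hle : (leafLabels γ (M.toDBFSeq.tree γ (k+1))).card ≤ 2 ^ (k+1) := by
          rw [card_leafLabels]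
          exact numLeaves_DBFSeq _ hγ _
        omega
      have := hmax γ hγ t' (isDepthKTree_of_full hfull)
      rw [hcount1] at this
      omega
    -- α decides χ; rule out α ⊢₀ ¬χ using freedom from deep contradictions
    rcases hdec α hmem with hpos | hneg
    · exact Der0.orE1 hpos (Der0.dnI hφder)
    · exfalso
      have hnegψ : Der0O α (.neg ψ) := Der0.negOrE2 hneg
      have hccbot : CCO α Sentence.bot := by
        intro v hv
        have e1 : eval v φ = true := der0_sound hφder v hv
        have e2 : eval v ψ = true := by
          refine derK_sound k {φ} ψ h v ?_
          intro g hg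
          rcases Set.mem_singleton_iff.1 hg with rfl
          exact e1
        have e3 := der0_sound hnegψ v hv
        simp only [eval] at e3
        rw [e2] at e3
        simp at e3
      exact hbot (hfree γ hγ α hmem hccbot)
  -- conclude by comparing the two belief sums termwise
  unfold DBMSeq.B
  apply Finset.sum_le_sum
  intro α hα
  by_cases hc : Der0O α φ ∧ ¬ Der0O α Sentence.bot
  · rw [if_pos hc, if_pos ⟨key α hα hc.1 hc.2, hc.2⟩]
  · rw [if_neg hc]
    split_ifs with h2
    · exact M.nonneg _ α hα
    · exact le_refl 0

end DBB
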